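/- For every positive C-RASP program P with L(P) ≠ ∅, there exists a string w ∈ L(P) of length at most exponential in the size of P. Moreover this bound is tight: for each n ≥ 1, the program Pₙ := (#[Q_a] = n) over the single-letter alphabet {a}, with n encoded in binary (so |Pₙ| = O(log n)), defines the singleton {aⁿ}, whose unique string has length exponential in |Pₙ|. -/

import Mathlib

inductive CmpOp : Type
  | lt | le | eq | ge | gt

def CmpOp.holds : CmpOp → ℤ → ℤ → Bool
  | .lt, x, y => decide (x < y)
  | .le, x, y => decide (x ≤ y)
  | .eq, x, y => decide (x = y)
  | .ge, x, y => decide (y ≤ x)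
  | .gt, x, y => decide (y < x)

mutual
inductive CForm (α : Type) : Type
  | sym : α → CForm α
  | not : CForm α → CForm α
  | and : CForm α → CForm α → CForm α
  | prev : CForm α → CForm α
  | hist : CForm α → CForm α
  | cmp : CTerm α → CmpOp → ℤ → CForm α
inductive CTerm (α : Type) : Type
  | const : ℤ → CTerm α
  | cnt : CForm α → CTerm α
  | add : CTerm α → CTerm α → CTerm α
  | smul : ℤ → CTerm α → CTerm α
end

mutual
def CForm.eval {α : Type} [DecidableEq α] : CForm α → List α → ℕ → Bool
  | .sym a, w, i => w[i - 1]? == some a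
  | .not φ, w, i => !(φ.eval w i)
  | .and φ ψ, w, i => φ.eval w i && ψ.eval w i
  | .prev φ, w, i => ((List.range i).filter (fun j => 0 < j)).any (fun j => φ.eval w j)
  | .hist φ, w, i => ((List.range (i + 1)).filter (fun j => 0 < j)).all (fun j => φ.eval w j)
  | .cmp t op k, w, i => op.holds (t.eval w i) k
def CTerm.eval {α : Type} [DecidableEq α] : CTerm α → List α → ℕ → ℤ
  | .const c, _, _ => c
  | .cnt φ, w, i =>
      ((((List.range (i + 1)).filter (fun j => 0 < j)).countP (fun j => φ.eval w j) : ℕ) : ℤ)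
  | .add t u, w, i => t.eval w i + u.eval w i
  | .smul a t, w, i => a * t.eval w i
end

def CForm.lang {α : Type} [DecidableEq α] (φ : CForm α) : Set (List α) :=
  {w | φ.eval w w.length = true}

mutual
def CForm.depth {α : Type} : CForm α → ℕ
  | .sym _ => 0
  | .not φ => φ.depth
  | .and φ ψ => max φ.depth ψ.depth
  | .prev φ => φ.depth + 1
  | .hist φ => φ.depth + 1
  | .cmp t _ _ => t.depth
def CTerm.depth {α : Type} : CTerm α → ℕ
  | .const _ => 0
  | .cnt φ => φ.depth + 1
  | .add t u => max t.depth u.depth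
  | .smul _ t => t.depth
end

def trueF {α : Type} : CForm α := .cmp (.const 0) .eq 0

def conjList {α : Type} (l : List (CForm α)) : CForm α := l.foldr .and trueF


/-- Number of bits of an integer constant (constants are encoded in binary). -/
def zsize (z : ℤ) : ℕ := Nat.log 2 z.natAbs + 1

mutual
/-- Size of a formula, with constants counted in binary. -/
def CForm.size {α : Type} : CForm α → ℕ
  | .sym _ => 1
  | .not φ => φ.size + 1
  | .and φ ψ => φ.size + ψ.size + 1
  | .prev φ => φ.size + 1
  | .hist φ => φ.size + 1
  | .cmp t _ k => t.size + zsize k + 1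
def CTerm.size {α : Type} : CTerm α → ℕ
  | .const c => zsize c + 1
  | .cnt φ => φ.size + 1
  | .add t u => t.size + u.size + 1
  | .smul a t => zsize a + t.size + 1
end

mutual
/-- Precision: number of bits of the largest constant occurring. -/
def CForm.prec {α : Type} : CForm α → ℕ
  | .sym _ => 0
  | .not φ => φ.prec
  | .and φ ψ => max φ.prec ψ.prec
  | .prev φ => φ.prec
  | .hist φ => φ.prec
  | .cmp t _ k => max t.prec (zsize k)
def CTerm.prec {α : Type} : CTerm α → ℕ
  | .const c => zsize c
  | .cnt φ => φ.prec
  | .add t u => max t.prec u.prec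
  | .smul a t => max (zsize a) t.prec
end

/-- Number of summands of a term. -/
def CTerm.summands {α : Type} : CTerm α → ℕ
  | .const _ => 1
  | .cnt _ => 1
  | .add t u => t.summands + u.summands
  | .smul _ t => t.summands

mutual
/-- Girth: the maximum number of summands occurring in any sum. -/
def CForm.girth {α : Type} : CForm α → ℕ
  | .sym _ => 0
  | .not φ => φ.girth
  | .and φ ψ => max φ.girth ψ.girth
  | .prev φ => φ.girth
  | .hist φ => φ.girth
  | .cmp t _ _ => max t.girthIn t.summands
def CTerm.girthIn {α : Type} : CTerm α → ℕ
  | .const _ => 0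
  | .cnt φ => φ.girth
  | .add t u => max t.girthIn u.girthIn
  | .smul _ t => t.girthIn
end

mutual
/-- The positive fragment C-RASP₊: no temporal operators, and all coefficients and
constants are natural numbers. -/
def CForm.Positive {α : Type} : CForm α → Prop
  | .sym _ => True
  | .not φ => φ.Positive
  | .and φ ψ => φ.Positive ∧ ψ.Positive
  | .prev _ => False
  | .hist _ => False
  | .cmp t _ k => t.Positive ∧ 0 ≤ k
def CTerm.Positive {α : Type} : CTerm α → Prop
  | .const c => 0 ≤ c
  | .cnt φ => φ.Positive
  | .add t u => t.Positive ∧ u.Positive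
  | .smul a t => 0 ≤ a ∧ t.Positive
end

/-- Formulas of the unary past temporal logic TL[◆]. -/
inductive TForm (α : Type) : Type
  | sym : α → TForm α
  | not : TForm α → TForm α
  | and : TForm α → TForm α → TForm α
  | prev : TForm α → TForm α
  | hist : TForm α → TForm α

def TForm.eval {α : Type} [DecidableEq α] : TForm α → List α → ℕ → Bool
  | .sym a, w, i => w[i - 1]? == some a
  | .not φ, w, i => !(φ.eval w i)
  | .and φ ψ, w, i => φ.eval w i && ψ.eval w i
  | .prev φ, w, i => ((List.range i).filter (fun j => 0 < j)).any (fun j => φ.eval w j)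
  | .hist φ, w, i => ((List.range (i + 1)).filter (fun j => 0 < j)).all (fun j => φ.eval w j)

def TForm.lang {α : Type} [DecidableEq α] (φ : TForm α) : Set (List α) :=
  {w | φ.eval w w.length = true}

def TForm.size {α : Type} : TForm α → ℕ
  | .sym _ => 1
  | .not φ => φ.size + 1
  | .and φ ψ => φ.size + ψ.size + 1
  | .prev φ => φ.size + 1
  | .hist φ => φ.size + 1

/-- The program `Pₙ := (#[Q_a] = n)` over the single-letter alphabet, with n in binary. -/
def Pn (n : ℕ) : CForm Unit := .cmp (.cnt (.sym ())) .eq (n : ℤ)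

-- counting helpers
def cntN (f : ℕ → Bool) (i : ℕ) : ℕ := ((List.range (i+1)).filter (fun j => 0 < j)).countP f

lemma cntN_succ (f : ℕ → Bool) (i : ℕ) :
    cntN f (i+1) = cntN f i + (if f (i+1) then 1 else 0) := by
  unfold cntN
  rw [List.range_succ (n := i+1), List.filter_append, List.countP_append]
  simp [List.countP_cons]

lemma cntN_mono (f : ℕ → Bool) {i i' : ℕ} (h : i ≤ i') : cntN f i ≤ cntN f i' :=
  List.Sublist.countP_le (List.Sublist.filter _ (List.range_sublist.2 (by omega)))

lemma cntN_congr {f g : ℕ → Bool} (i : ℕ) (h : ∀ j, 1 ≤ j → j ≤ i → f j = g j) :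
    cntN f i = cntN g i := by
  induction i with
  | zero => simp [cntN, List.range_succ]
  | succ i ih =>
      rw [cntN_succ, cntN_succ, ih (fun j h1 h2 => h j h1 (by omega)), h (i+1) (by omega) le_rfl]

lemma cntN_shift (f g : ℕ → Bool) (p : ℕ) (hp : 1 ≤ p)
    (h1 : ∀ j', 1 ≤ j' → j' < p → g j' = f j')
    (h2 : ∀ j', p ≤ j' → g j' = f (j'+1)) :
    ∀ j, p ≤ j →
      (cntN g j : ℤ) = cntN f (j+1) - ((cntN f p : ℤ) - cntN f (p-1)) := by
  obtain ⟨q, rfl⟩ : ∃ q, p = q + 1 := ⟨p - 1, by omega⟩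
  intro j hj
  induction j, hj using Nat.le_induction with
  | base =>
      have e1 : cntN g q = cntN f q := cntN_congr _ (fun j hj1 hj2 => h1 j hj1 (by omega))
      have e2 := cntN_succ g q
      have e3 := cntN_succ f (q+1)
      rw [h2 (q+1) le_rfl] at e2
      simp only [Nat.add_sub_cancel]
      rcases hf : f (q+1+1) <;> simp [hf] at e2 e3 <;> omega
  | succ j hj ih =>
      have e2 := cntN_succ g j
      have e3 := cntN_succ f (j+1)
      rw [h2 (j+1) (by omega)] at e2
      simp only [Nat.add_sub_cancel] at ih ⊢
      rcases hf : f (j+1+1) <;> simp [hf] at e2 e3 <;> omega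
section Aux2
variable {α : Type} [DecidableEq α]

lemma eval_cnt_eq (φ : CForm α) (w : List α) (i : ℕ) :
    (CTerm.cnt φ).eval w i = ((cntN (fun j => φ.eval w j) i : ℕ) : ℤ) := by
  simp [CTerm.eval, cntN]

theorem CTerm.eval_nonneg : ∀ (t : CTerm α), t.Positive → ∀ (w : List α) (i : ℕ), 0 ≤ t.eval w i
  | .const c, h, w, i => by simpa [CTerm.eval, CTerm.Positive] using h
  | .cnt φ, _, w, i => by rw [eval_cnt_eq]; exact Int.natCast_nonneg _
  | .add t u, h, w, i => by
      rw [CTerm.Positive] at h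
      simpa [CTerm.eval] using add_nonneg (t.eval_nonneg h.1 w i) (u.eval_nonneg h.2 w i)
  | .smul a t, h, w, i => by
      rw [CTerm.Positive] at h
      simpa [CTerm.eval] using mul_nonneg h.1 (t.eval_nonneg h.2 w i)

theorem CTerm.eval_mono : ∀ (t : CTerm α), t.Positive → ∀ (w : List α) {i i' : ℕ}, i ≤ i' →
    t.eval w i ≤ t.eval w i'
  | .const c, h, w, i, i', hii => by simp [CTerm.eval]
  | .cnt φ, _, w, i, i', hii => by
      rw [eval_cnt_eq, eval_cnt_eq]
      exact_mod_cast cntN_mono _ hii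
  | .add t u, h, w, i, i', hii => by
      rw [CTerm.Positive] at h
      simpa [CTerm.eval] using add_le_add (t.eval_mono h.1 w hii) (u.eval_mono h.2 w hii)
  | .smul a t, h, w, i, i', hii => by
      rw [CTerm.Positive] at h
      simpa [CTerm.eval] using mul_le_mul_of_nonneg_left (t.eval_mono h.2 w hii) h.1

lemma CmpOp.holds_of_gt (op : CmpOp) {x y k : ℤ} (hx : k < x) (hy : k < y) :
    op.holds x k = op.holds y k := by
  cases op <;> simp [CmpOp.holds] <;> omega

end Aux2
mutual
def CForm.guards {α : Type} : CForm α → List (CTerm α × ℤ)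
  | .sym _ => []
  | .not φ => φ.guards
  | .and φ ψ => φ.guards ++ ψ.guards
  | .prev φ => φ.guards
  | .hist φ => φ.guards
  | .cmp t _ k => (t, k) :: t.guardsIn
def CTerm.guardsIn {α : Type} : CTerm α → List (CTerm α × ℤ)
  | .const _ => []
  | .cnt φ => φ.guards
  | .add t u => t.guardsIn ++ u.guardsIn
  | .smul _ t => t.guardsIn
end

mutual
def CForm.DelOK {α : Type} [DecidableEq α] (w : List α) (p : ℕ) : CForm α → Prop
  | .sym _ => True
  | .not φ => φ.DelOK w p
  | .and φ ψ => φ.DelOK w p ∧ ψ.DelOK w p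
  | .prev φ => φ.DelOK w p
  | .hist φ => φ.DelOK w p
  | .cmp t _ k => t.DelOKIn w p ∧ (k < t.eval w (p-1) ∨ t.eval w p = t.eval w (p-1))
def CTerm.DelOKIn {α : Type} [DecidableEq α] (w : List α) (p : ℕ) : CTerm α → Prop
  | .const _ => True
  | .cnt φ => φ.DelOK w p
  | .add t u => t.DelOKIn w p ∧ u.DelOKIn w p
  | .smul _ t => t.DelOKIn w p
end

mutual
theorem CForm.delOK_of_guards {α : Type} [DecidableEq α] (w : List α) (p : ℕ) :
    ∀ (φ : CForm α),
      (∀ g ∈ φ.guards, g.2 < g.1.eval w (p-1) ∨ g.1.eval w p = g.1.eval w (p-1)) →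
      φ.DelOK w p
  | .sym a, _ => by rw [CForm.DelOK]; trivial
  | .not φ, h => by rw [CForm.DelOK]; exact CForm.delOK_of_guards w p φ (by simpa [CForm.guards] using h)
  | .and φ ψ, h => by
      rw [CForm.DelOK]
      simp only [CForm.guards, List.mem_append] at h
      exact ⟨CForm.delOK_of_guards w p φ (fun g hg => h g (Or.inl hg)),
             CForm.delOK_of_guards w p ψ (fun g hg => h g (Or.inr hg))⟩
  | .prev φ, h => by rw [CForm.DelOK]; exact CForm.delOK_of_guards w p φ (by simpa [CForm.guards] using h)
  | .hist φ, h => by rw [CForm.DelOK]; exact CForm.delOK_of_guards w p φ (by simpa [CForm.guards] using h)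
  | .cmp t op k, h => by
      rw [CForm.DelOK]
      simp only [CForm.guards, List.mem_cons] at h
      exact ⟨CTerm.delOKIn_of_guards w p t (fun g hg => h g (Or.inr hg)),
             h (t, k) (Or.inl rfl)⟩
theorem CTerm.delOKIn_of_guards {α : Type} [DecidableEq α] (w : List α) (p : ℕ) :
    ∀ (t : CTerm α),
      (∀ g ∈ t.guardsIn, g.2 < g.1.eval w (p-1) ∨ g.1.eval w p = g.1.eval w (p-1)) →
      t.DelOKIn w p
  | .const _, _ => by rw [CTerm.DelOKIn]; trivial
  | .cnt φ, h => by rw [CTerm.DelOKIn]; exact CForm.delOK_of_guards w p φ (by simpa [CTerm.guardsIn] using h)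
  | .add t u, h => by
      rw [CTerm.DelOKIn]
      simp only [CTerm.guardsIn, List.mem_append] at h
      exact ⟨CTerm.delOKIn_of_guards w p t (fun g hg => h g (Or.inl hg)),
             CTerm.delOKIn_of_guards w p u (fun g hg => h g (Or.inr hg))⟩
  | .smul a t, h => by rw [CTerm.DelOKIn]; exact CTerm.delOKIn_of_guards w p t (by simpa [CTerm.guardsIn] using h)
end

mutual
theorem CForm.guards_positive {α : Type} : ∀ (φ : CForm α), φ.Positive →
    ∀ g ∈ φ.guards, (g.1).Positive
  | .sym a, _ => by simp [CForm.guards]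
  | .not φ, h => by
      rw [CForm.Positive] at h; simpa [CForm.guards] using CForm.guards_positive φ h
  | .and φ ψ, h => by
      rw [CForm.Positive] at h
      intro g hg
      rcases (List.mem_append.1 (by simpa [CForm.guards] using hg)) with h' | h'
      · exact CForm.guards_positive φ h.1 g h'
      · exact CForm.guards_positive ψ h.2 g h'
  | .prev φ, h => by rw [CForm.Positive] at h; exact absurd h not_false
  | .hist φ, h => by rw [CForm.Positive] at h; exact absurd h not_false
  | .cmp t op k, h => by
      rw [CForm.Positive] at h
      intro g hg
      rcases List.mem_cons.1 (by simpa [CForm.guards] using hg) with h' | h'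
      · subst h'; exact h.1
      · exact CTerm.guardsIn_positive t h.1 g h'
theorem CTerm.guardsIn_positive {α : Type} : ∀ (t : CTerm α), t.Positive →
    ∀ g ∈ t.guardsIn, (g.1).Positive
  | .const _, _ => by simp [CTerm.guardsIn]
  | .cnt φ, h => by
      rw [CTerm.Positive] at h; simpa [CTerm.guardsIn] using CForm.guards_positive φ h
  | .add t u, h => by
      rw [CTerm.Positive] at h
      intro g hg
      rcases (List.mem_append.1 (by simpa [CTerm.guardsIn] using hg)) with h' | h'
      · exact CTerm.guardsIn_positive t h.1 g h'
      · exact CTerm.guardsIn_positive u h.2 g h'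
  | .smul a t, h => by
      rw [CTerm.Positive] at h; simpa [CTerm.guardsIn] using CTerm.guardsIn_positive t h.2
end
mutual
theorem CForm.eval_eraseIdx {α : Type} [DecidableEq α] (w : List α) (p : ℕ) (hp : 1 ≤ p) :
    ∀ (φ : CForm α), φ.Positive → φ.DelOK w p → ∀ j : ℕ,
      (1 ≤ j → j < p → φ.eval (w.eraseIdx (p-1)) j = φ.eval w j) ∧
      (p ≤ j → φ.eval (w.eraseIdx (p-1)) j = φ.eval w (j+1))
  | .sym a, _, _, j => by
      constructor
      · intro h1 h2
        simp only [CForm.eval, List.getElem?_eraseIdx]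
        rw [if_pos (by omega)]
      · intro h1
        simp only [CForm.eval, List.getElem?_eraseIdx]
        rw [if_neg (by omega)]
        congr 2
        omega
  | .not φ, hpos, hdel, j => by
      rw [CForm.Positive] at hpos; rw [CForm.DelOK] at hdel
      have ih := CForm.eval_eraseIdx w p hp φ hpos hdel j
      constructor
      · intro h1 h2; simp only [CForm.eval, ih.1 h1 h2]
      · intro h1; simp only [CForm.eval, ih.2 h1]
  | .and φ ψ, hpos, hdel, j => by
      rw [CForm.Positive] at hpos; rw [CForm.DelOK] at hdel
      have ih1 := CForm.eval_eraseIdx w p hp φ hpos.1 hdel.1 j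
      have ih2 := CForm.eval_eraseIdx w p hp ψ hpos.2 hdel.2 j
      constructor
      · intro h1 h2; simp only [CForm.eval, ih1.1 h1 h2, ih2.1 h1 h2]
      · intro h1; simp only [CForm.eval, ih1.2 h1, ih2.2 h1]
  | .prev φ, hpos, _, j => by rw [CForm.Positive] at hpos; exact absurd hpos not_false
  | .hist φ, hpos, _, j => by rw [CForm.Positive] at hpos; exact absurd hpos not_false
  | .cmp t op k, hpos, hdel, j => by
      rw [CForm.Positive] at hpos; rw [CForm.DelOK] at hdel
      have ih := CTerm.eval_eraseIdx w p hp t hpos.1 hdel.1 j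
      constructor
      · intro h1 h2; simp only [CForm.eval, ih.1 h1 h2]
      · intro h1
        simp only [CForm.eval, ih.2 h1]
        rcases hdel.2 with hk | he
        · refine CmpOp.holds_of_gt op ?_ ?_
          · have hmono : t.eval w p ≤ t.eval w (j+1) := t.eval_mono hpos.1 w (by omega)
            omega
          · have hmono : t.eval w (p-1) ≤ t.eval w (j+1) := t.eval_mono hpos.1 w (by omega)
            omega
        · rw [he]; ring_nf
theorem CTerm.eval_eraseIdx {α : Type} [DecidableEq α] (w : List α) (p : ℕ) (hp : 1 ≤ p) :
    ∀ (t : CTerm α), t.Positive → t.DelOKIn w p → ∀ j : ℕ,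
      (1 ≤ j → j < p → t.eval (w.eraseIdx (p-1)) j = t.eval w j) ∧
      (p ≤ j → t.eval (w.eraseIdx (p-1)) j =
        t.eval w (j+1) - (t.eval w p - t.eval w (p-1)))
  | .const c, _, _, j => by
      constructor
      · intro _ _; rfl
      · intro _; simp [CTerm.eval]
  | .cnt φ, hpos, hdel, j => by
      rw [CTerm.Positive] at hpos; rw [CTerm.DelOKIn] at hdel
      have ih := fun j' => CForm.eval_eraseIdx w p hp φ hpos hdel j'
      constructor
      · intro h1 h2
        rw [eval_cnt_eq, eval_cnt_eq]
        norm_cast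
        exact cntN_congr j (fun j' hj1 hj2 => ((ih j').1 hj1 (by omega)).symm) ▸ rfl
      · intro h1
        rw [eval_cnt_eq, eval_cnt_eq, eval_cnt_eq, eval_cnt_eq]
        exact cntN_shift (fun j' => φ.eval w j') (fun j' => φ.eval (w.eraseIdx (p-1)) j') p hp
          (fun j' hj1 hj2 => (ih j').1 hj1 hj2) (fun j' hj => (ih j').2 hj) j h1
  | .add t u, hpos, hdel, j => by
      rw [CTerm.Positive] at hpos; rw [CTerm.DelOKIn] at hdel
      have ih1 := CTerm.eval_eraseIdx w p hp t hpos.1 hdel.1 j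
      have ih2 := CTerm.eval_eraseIdx w p hp u hpos.2 hdel.2 j
      constructor
      · intro h1 h2; simp only [CTerm.eval, ih1.1 h1 h2, ih2.1 h1 h2]
      · intro h1; simp only [CTerm.eval, ih1.2 h1, ih2.2 h1]; ring
  | .smul a t, hpos, hdel, j => by
      rw [CTerm.Positive] at hpos; rw [CTerm.DelOKIn] at hdel
      have ih := CTerm.eval_eraseIdx w p hp t hpos.2 hdel j
      constructor
      · intro h1 h2; simp only [CTerm.eval, ih.1 h1 h2]
      · intro h1; simp only [CTerm.eval, ih.2 h1]; ring
end
open Classical in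
lemma card_bound {α : Type} [DecidableEq α] (w : List α) :
    ∀ (L : List (CTerm α × ℤ)), (∀ g ∈ L, (g.1).Positive) →
    ∀ S : Finset ℕ, (∀ p ∈ S, 1 ≤ p) →
      (∀ p ∈ S, ∃ g ∈ L, g.1.eval w (p-1) ≤ g.2 ∧ g.1.eval w (p-1) < g.1.eval w p) →
      S.card ≤ (L.map (fun g => g.2.toNat + 1)).sum
  | [], _, S, _, hbad => by
      simp only [List.map_nil, List.sum_nil, Nat.le_zero, Finset.card_eq_zero]
      refine Finset.eq_empty_of_forall_notMem (fun p hp => ?_)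
      obtain ⟨g, hg, _⟩ := hbad p hp
      simp at hg
  | g :: L, hLpos, S, hS1, hbad => by
      classical
      set viol : ℕ → Prop := fun p => g.1.eval w (p-1) ≤ g.2 ∧ g.1.eval w (p-1) < g.1.eval w p with hviol
      have hsplit : S.card ≤ (S.filter viol).card + (S.filter (fun p => ¬ viol p)).card := by
        exact le_of_eq (Finset.card_filter_add_card_filter_not (p := viol)).symm
      have h1 : (S.filter viol).card ≤ g.2.toNat + 1 := by
        have hpos := hLpos g List.mem_cons_self
        refine le_trans (Finset.card_le_card_of_injOn (t := Finset.range (g.2.toNat + 1))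
          (fun p => (g.1.eval w (p-1)).toNat)
          (fun p hp => ?_) (fun p hp q hq hpq => ?_)) (le_of_eq (Finset.card_range _))
        · simp only [Finset.mem_coe, Finset.mem_filter] at hp
          refine Finset.mem_coe.2 (Finset.mem_range.2 ?_)
          show (g.1.eval w (p-1)).toNat < g.2.toNat + 1
          have h0 : 0 ≤ g.1.eval w (p-1) := g.1.eval_nonneg hpos w _
          have := hp.2.1
          omega
        · simp only [Finset.coe_filter, Set.mem_setOf_eq] at hp hq
          have hpq' : (g.1.eval w (p-1)).toNat = (g.1.eval w (q-1)).toNat := hpq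
          by_contra hne
          rcases Nat.lt_or_ge p q with hlt | hge
          · have hm : g.1.eval w p ≤ g.1.eval w (q-1) :=
              g.1.eval_mono hpos w (by have := hS1 q hq.1; omega)
            have h0 : 0 ≤ g.1.eval w (p-1) := g.1.eval_nonneg hpos w _
            have h0' : 0 ≤ g.1.eval w (q-1) := g.1.eval_nonneg hpos w _
            have := hp.2.2; have := hq.2.2
            omega
          · have hlt2 : q < p := by omega
            have hm : g.1.eval w q ≤ g.1.eval w (p-1) :=
              g.1.eval_mono hpos w (by have := hS1 p hp.1; omega)
            have h0 : 0 ≤ g.1.eval w (q-1) := g.1.eval_nonneg hpos w _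
            have h0' : 0 ≤ g.1.eval w (p-1) := g.1.eval_nonneg hpos w _
            have := hp.2.2; have := hq.2.2
            omega
      have h2 : (S.filter (fun p => ¬ viol p)).card ≤ (L.map (fun g => g.2.toNat + 1)).sum := by
        refine card_bound w L (fun g' hg' => hLpos g' (List.mem_cons_of_mem g hg')) _
          (fun p hp => hS1 p (Finset.mem_filter.1 hp).1) (fun p hp => ?_)
        obtain ⟨hpS, hnv⟩ := Finset.mem_filter.1 hp
        obtain ⟨g', hg', hcond⟩ := hbad p hpS
        rcases List.mem_cons.1 hg' with rfl | hmem
        · exact absurd hcond hnv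
        · exact ⟨g', hmem, hcond⟩
      calc S.card ≤ _ := hsplit
        _ ≤ (g.2.toNat + 1) + (L.map (fun g => g.2.toNat + 1)).sum := Nat.add_le_add h1 h2
        _ = ((g :: L).map (fun g => g.2.toNat + 1)).sum := by simp
lemma two_pow_add_le {a b c : ℕ} (ha : a ≤ c) (hb : b ≤ c) : 2^a + 2^b ≤ 2^(c+1) := by
  have h1 : 2^a ≤ 2^c := Nat.pow_le_pow_right (by norm_num) ha
  have h2 : 2^b ≤ 2^c := Nat.pow_le_pow_right (by norm_num) hb
  calc 2^a + 2^b ≤ 2^c + 2^c := Nat.add_le_add h1 h2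
    _ = 2^(c+1) := by ring

lemma toNat_succ_le_pow_zsize (k : ℤ) : k.toNat + 1 ≤ 2 ^ zsize k := by
  have h1 : k.natAbs < 2 ^ (Nat.log 2 k.natAbs + 1) :=
    Nat.lt_pow_succ_log_self (by norm_num) _
  have h2 : k.toNat ≤ k.natAbs := by rcases k with k | k <;> simp [Int.toNat, Int.natAbs]
  rw [zsize]
  omega

mutual
theorem CForm.guards_sum_le {α : Type} : ∀ (φ : CForm α),
    ((φ.guards).map (fun g => g.2.toNat + 1)).sum ≤ 2 ^ φ.size
  | .sym a => by simp [CForm.guards, CForm.size]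
  | .not φ => by
      rw [CForm.guards, CForm.size]
      exact le_trans φ.guards_sum_le (Nat.pow_le_pow_right (by norm_num) (by omega))
  | .and φ ψ => by
      rw [CForm.guards, CForm.size, List.map_append, List.sum_append]
      exact le_trans (Nat.add_le_add φ.guards_sum_le ψ.guards_sum_le)
        (two_pow_add_le (by omega) (by omega))
  | .prev φ => by
      rw [CForm.guards, CForm.size]
      exact le_trans φ.guards_sum_le (Nat.pow_le_pow_right (by norm_num) (by omega))
  | .hist φ => by
      rw [CForm.guards, CForm.size]
      exact le_trans φ.guards_sum_le (Nat.pow_le_pow_right (by norm_num) (by omega))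
  | .cmp t op k => by
      rw [CForm.guards, CForm.size, List.map_cons, List.sum_cons]
      have h1 := toNat_succ_le_pow_zsize k
      have h2 := t.guardsIn_sum_le
      calc k.toNat + 1 + ((t.guardsIn).map (fun g => g.2.toNat + 1)).sum
          ≤ 2 ^ zsize k + 2 ^ t.size := Nat.add_le_add h1 h2
        _ ≤ 2 ^ (t.size + zsize k + 1) := two_pow_add_le (by omega) (by omega)
theorem CTerm.guardsIn_sum_le {α : Type} : ∀ (t : CTerm α),
    ((t.guardsIn).map (fun g => g.2.toNat + 1)).sum ≤ 2 ^ t.size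
  | .const c => by simp [CTerm.guardsIn]
  | .cnt φ => by
      rw [CTerm.guardsIn, CTerm.size]
      exact le_trans φ.guards_sum_le (Nat.pow_le_pow_right (by norm_num) (by omega))
  | .add t u => by
      rw [CTerm.guardsIn, CTerm.size, List.map_append, List.sum_append]
      exact le_trans (Nat.add_le_add t.guardsIn_sum_le u.guardsIn_sum_le)
        (two_pow_add_le (by omega) (by omega))
  | .smul a t => by
      rw [CTerm.guardsIn, CTerm.size]
      exact le_trans t.guardsIn_sum_le (Nat.pow_le_pow_right (by norm_num) (by omega))
end

lemma small_model {α : Type} [DecidableEq α] (φ : CForm α) (hpos : φ.Positive)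
    (hne : (CForm.lang φ).Nonempty) :
    ∃ w ∈ CForm.lang φ, w.length ≤ 1 + ((φ.guards).map (fun g => g.2.toNat + 1)).sum := by
  classical
  obtain ⟨w₀, hw₀⟩ := hne
  have hex : ∃ m, ∃ w, w ∈ CForm.lang φ ∧ w.length = m := ⟨w₀.length, w₀, hw₀, rfl⟩
  obtain ⟨w, hw, hwlen⟩ := Nat.find_spec hex
  set n := Nat.find hex with hn
  refine ⟨w, hw, ?_⟩
  rw [hwlen]
  by_contra hbig
  push_neg at hbig
  have hbad : ∀ p ∈ Finset.Icc 1 (n-1), ∃ g ∈ φ.guards,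
      g.1.eval w (p-1) ≤ g.2 ∧ g.1.eval w (p-1) < g.1.eval w p := by
    intro p hp
    rw [Finset.mem_Icc] at hp
    by_contra hgood
    push_neg at hgood
    have hdel : φ.DelOK w p := by
      refine CForm.delOK_of_guards w p φ (fun g hg => ?_)
      rcases le_or_gt (g.1.eval w (p-1)) g.2 with hle | hlt
      · right
        have h1 := hgood g hg hle
        have h2 : g.1.eval w (p-1) ≤ g.1.eval w p :=
          g.1.eval_mono (φ.guards_positive hpos g hg) w (by omega)
        omega
      · exact Or.inl hlt
    -- delete position p to get a shorter word in the language
    have hp1 : 1 ≤ p := hp.1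
    have hlenw : w.length = n := hwlen
    have hn2 : 2 ≤ n := by omega
    set w' := w.eraseIdx (p-1) with hw'
    have hlen' : w'.length = n - 1 := by
      rw [hw', List.length_eraseIdx, hlenw, if_pos (by omega)]
    have hmem : w' ∈ CForm.lang φ := by
      have h2 := (CForm.eval_eraseIdx w p hp1 φ hpos hdel (n-1)).2 (by omega)
      have h3 : n - 1 + 1 = n := by omega
      rw [h3] at h2
      show φ.eval w' w'.length = true
      rw [hlen', h2, ← hlenw]
      exact hw
    exact absurd ⟨w', hmem, hlen'⟩ (Nat.find_min hex (show n - 1 < n by omega))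
  have hcard := card_bound w φ.guards (φ.guards_positive hpos) (Finset.Icc 1 (n-1))
    (fun p hp => (Finset.mem_Icc.1 hp).1) hbad
  rw [Nat.card_Icc] at hcard
  omega
lemma cntN_true (i : ℕ) : cntN (fun _ => true) i = i := by
  induction i with
  | zero => simp [cntN, List.range_succ]
  | succ i ih => rw [cntN_succ, ih]; simp

lemma lang_Pn (n : ℕ) : CForm.lang (Pn n) = {List.replicate n ()} := by
  ext w
  have hc : cntN (fun j => w[j-1]? == some ()) w.length = w.length := by
    rw [cntN_congr w.length (g := fun _ => true) (fun j h1 h2 => ?_), cntN_true]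
    have hj : j - 1 < w.length := by omega
    simp [List.getElem?_eq_getElem hj]
  show (Pn n).eval w w.length = true ↔ w ∈ ({List.replicate n ()} : Set (List Unit))
  rw [Set.mem_singleton_iff, Pn]
  simp only [CForm.eval, CmpOp.holds, eval_cnt_eq, cntN, decide_eq_true_eq]
  rw [← cntN, hc]
  constructor
  · intro h
    refine List.eq_replicate_iff.2 ⟨by exact_mod_cast h, fun b _ => rfl⟩
  · rintro rfl
    simp
/-- Exponential small-model bound for positive C-RASP, and its tightness: every nonempty
positive C-RASP language has a member of length at most exponential in the program size,
and `Pₙ` (of size O(log n)) defines the singleton `{aⁿ}`, whose unique string has length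
exponential in `|Pₙ|`. -/
theorem crasp_pos_small_model :
    (∃ c : ℕ, ∀ (α : Type) [DecidableEq α] (φ : CForm α), φ.Positive →
      (CForm.lang φ).Nonempty →
      ∃ w ∈ CForm.lang φ, w.length ≤ 2 ^ (c * (φ.size + 1) ^ c)) ∧
    (∃ c : ℕ, 0 < c ∧ ∀ n : ℕ, 1 ≤ n →
      CForm.lang (Pn n) = {List.replicate n ()} ∧
      (Pn n).size ≤ c * (Nat.log 2 n + 1)) := by
  constructor
  · refine ⟨2, fun α _ φ hpos hne => ?_⟩
    obtain ⟨w, hw, hlen⟩ := small_model φ hpos hne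
    refine ⟨w, hw, le_trans hlen ?_⟩
    have h1 := φ.guards_sum_le
    have h2 : 1 + ((φ.guards).map (fun g => g.2.toNat + 1)).sum ≤ 2 ^ (φ.size + 1) := by
      have h3 : (1:ℕ) ≤ 2 ^ φ.size := Nat.one_le_two_pow
      have h4 : 2 ^ (φ.size+1) = 2 ^ φ.size + 2 ^ φ.size := by ring
      omega
    refine le_trans h2 (Nat.pow_le_pow_right (by norm_num) ?_)
    nlinarith [sq_nonneg (φ.size + 1)]
  · refine ⟨4, by norm_num, fun n hn => ⟨lang_Pn n, ?_⟩⟩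
    simp only [Pn, CForm.size, CTerm.size, zsize, Int.natAbs_natCast]
    omega
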